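/- For monomial ideals J ⊂ I ⊂ S, the fdepth does not decrease upon localization at f: fdepth(I/J) ≤ fdepth((I/J)_f). More precisely, if F : J = J_0 ⊂ J_1 ⊂ … ⊂ J_r = I is a prime filtration of I/J with Supp(F) = {P_1,…,P_r}, then discarding from the localized chain J_f = (J_0)_f ⊆ (J_1)_f ⊆ … ⊆ (J_r)_f = I_f those steps with (J_i)_f = (J_{i-1})_f (equivalently S_f/P_iS_f = 0) yields a prime filtration F_f of (I/J)_f, and dim S_f/P_iS_f = dim S/P_i whenever S_f/P_iS_f ≠ 0, so fdepth(F_f) ≥ fdepth(F). -/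

import Mathlib

/-!
Combinatorial model of the localized polynomial ring `S_f`, where
`S = K[x_1, …, x_n]`, `A ⊆ {1, …, n}` and `f = ∏_{j ∈ A} x_j`.

Since all the `ℤⁿ`-graded components of `S_f` are at most one-dimensional over `K`,
monomial `K`-subspaces of `S_f` (in particular monomial ideals, Stanley spaces and
modules `I/J`) are faithfully encoded by their sets of exponent vectors `a : Fin n → ℤ`,
direct sum decompositions into monomial subspaces correspond exactly to partitions of
the exponent sets, and (for those sets `Z` considered here) `u·K[Z]` is automatically a
free `K[Z]`-module.
-/

/-- Exponent vectors of the monomials of `S_f`: all `a : ℤⁿ` with `a j ≥ 0` for `j ∉ A`. -/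
def SfMon {n : ℕ} (A : Finset (Fin n)) : Set (Fin n → ℤ) :=
  {a | ∀ j, j ∉ A → 0 ≤ a j}

/-- `M` is the set of exponent vectors of the monomials of a monomial ideal of `S_f`
(for `A = ∅` this is a monomial ideal of the polynomial ring `S` itself). -/
def IsMonomialIdeal {n : ℕ} (A : Finset (Fin n)) (M : Set (Fin n → ℤ)) : Prop :=
  M ⊆ SfMon A ∧ ∀ a ∈ M, ∀ c ∈ SfMon A, a + c ∈ M

/-- Admissible sets of "variables" for Stanley spaces in `S_f`: `(i, true)` stands for
`x i` and `(i, false)` for `x i⁻¹`; inverse variables exist only for `i ∈ A`, and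
`{x i, x i⁻¹} ⊄ Z`. -/
def ZOk {n : ℕ} (A : Finset (Fin n)) (Z : Finset (Fin n × Bool)) : Prop :=
  (∀ i : Fin n, (i, false) ∈ Z → i ∈ A) ∧
  ∀ i : Fin n, ¬((i, true) ∈ Z ∧ (i, false) ∈ Z)

/-- Exponent vectors of the monomials of the Stanley space `u·K[Z]`. -/
def stanleySet {n : ℕ} (u : Fin n → ℤ) (Z : Finset (Fin n × Bool)) : Set (Fin n → ℤ) :=
  {a | ∀ i : Fin n, ((i, true) ∈ Z → u i ≤ a i) ∧ ((i, false) ∈ Z → a i ≤ u i) ∧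
      ((i, true) ∉ Z → (i, false) ∉ Z → a i = u i)}

/-- The family of Stanley spaces `u i · K[Z i]` is a Stanley decomposition of the
monomial `K`-vector space whose monomials have exponent vectors in `M`. -/
def IsStanleyDecompOn {n : ℕ} (A : Finset (Fin n)) (M : Set (Fin n → ℤ)) {ι : Type}
    (u : ι → Fin n → ℤ) (Z : ι → Finset (Fin n × Bool)) : Prop :=
  Finite ι ∧ (∀ i, ZOk A (Z i)) ∧
  Pairwise (fun i j : ι => Disjoint (stanleySet (u i) (Z i)) (stanleySet (u j) (Z j))) ∧
  (⋃ i, stanleySet (u i) (Z i)) = M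

/-- Stanley depth of the monomial `K`-space with exponent set `M` (value `⊤` for `M = ∅`). -/
noncomputable def sdepth {n : ℕ} (A : Finset (Fin n)) (M : Set (Fin n → ℤ)) : ℕ∞ :=
  sSup {k : ℕ∞ | ∃ (r : ℕ) (u : Fin r → Fin n → ℤ) (Z : Fin r → Finset (Fin n × Bool)),
    IsStanleyDecompOn A M u Z ∧ ∀ i, k ≤ ((Z i).card : ℕ∞)}

/-- The exponent vector of `f = ∏_{j ∈ A} x_j`. -/
def fVec {n : ℕ} (A : Finset (Fin n)) : Fin n → ℤ := fun i => if i ∈ A then 1 else 0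

/-- Localization at `f` of a monomial ideal (given by its set of exponent vectors). -/
def locSet {n : ℕ} (A : Finset (Fin n)) (M : Set (Fin n → ℤ)) : Set (Fin n → ℤ) :=
  {b ∈ SfMon A | ∃ k : ℕ, b + (k : ℤ) • fVec A ∈ M}

/-- `|a| = Σ_i |a_i|`, the degree used for the Hilbert series. -/
def degAbs {n : ℕ} (a : Fin n → ℤ) : ℕ := ∑ i, (a i).natAbs

/-- The Hilbert series `H_M(t) = Σ_d H(M,d) t^d`, `H(M,d) = #{a ∈ M : |a| = d}`, of the
`ℤⁿ`-graded `K`-vector space with monomial exponent set `M`. -/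
noncomputable def hilbSeries {n : ℕ} (M : Set (Fin n → ℤ)) : PowerSeries ℚ :=
  PowerSeries.mk fun d => (({a ∈ M | degAbs a = d}).ncard : ℚ)

/-- A prime filtration `J = N 0 ⊂ N 1 ⊂ … ⊂ N r = I` of `I/J` by monomial ideals of `S_f`,
with `i`-th factor isomorphic, as a `ℤⁿ`-graded module, to `(S_f/P_{B i})(-a i)`, where
`P_B` is the monomial prime ideal generated by the variables `x j`, `j ∈ B`. -/
def IsPrimeFiltration {n : ℕ} (A : Finset (Fin n)) (J I : Set (Fin n → ℤ)) (r : ℕ)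
    (N : Fin (r + 1) → Set (Fin n → ℤ)) (B : Fin r → Finset (Fin n))
    (a : Fin r → Fin n → ℤ) : Prop :=
  N 0 = J ∧ N (Fin.last r) = I ∧
  (∀ i : Fin (r + 1), IsMonomialIdeal A (N i)) ∧
  (∀ i : Fin r, N i.castSucc ⊂ N i.succ) ∧
  (∀ i : Fin r, ∀ j ∈ A, j ∉ B i) ∧
  (∀ i : Fin r, ∀ j, 0 ≤ a i j) ∧
  (∀ i : Fin r, ∀ j ∈ A, a i j = 0) ∧
  (∀ i : Fin r, N i.succ \ N i.castSucc =
    {b | ∃ c ∈ SfMon A, (∀ j ∈ B i, c j = 0) ∧ b = a i + c})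

/-- `fdepth` of `I/J` (value `⊤` for `I = J`); `dim S_f/P_B = n - |B|`. -/
noncomputable def fdepth {n : ℕ} (A : Finset (Fin n)) (J I : Set (Fin n → ℤ)) : ℕ∞ :=
  sSup {k : ℕ∞ | ∃ (r : ℕ) (N : Fin (r + 1) → Set (Fin n → ℤ)) (B : Fin r → Finset (Fin n))
      (a : Fin r → Fin n → ℤ), IsPrimeFiltration A J I r N B a ∧
      ∀ i, k ≤ ((n - (B i).card : ℕ) : ℕ∞)}

/-- The set of exponent vectors of the monomials of the colon ideal `(J :_{S_f} I)`,
which is the annihilator of `I/J`. -/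
def colonSet {n : ℕ} (A : Finset (Fin n)) (I J : Set (Fin n → ℤ)) : Set (Fin n → ℤ) :=
  {c ∈ SfMon A | ∀ a ∈ I, a + c ∈ J}

/-- The monomial prime `P_B·S_f` contains the monomial ideal with exponent set `Q`. -/
def primeContainsIdeal {n : ℕ} (B : Finset (Fin n)) (Q : Set (Fin n → ℤ)) : Prop :=
  ∀ c ∈ Q, ∃ j ∈ B, 1 ≤ c j

/-- `P_B·S_f` is a minimal prime ideal of the module `I/J`, i.e. a prime of `S_f`
(so `B ∩ A = ∅`) minimal among those containing `ann(I/J) = (J : I)`. -/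
def IsMinimalPrimeOf {n : ℕ} (A B : Finset (Fin n)) (I J : Set (Fin n → ℤ)) : Prop :=
  (∀ j ∈ A, j ∉ B) ∧ primeContainsIdeal B (colonSet A I J) ∧
  ∀ B' ⊆ B, primeContainsIdeal B' (colonSet A I J) → B' = B

section FdepthLocAux

variable {n : ℕ} (A : Finset (Fin n))

lemma fVec_nonneg (j : Fin n) : 0 ≤ fVec A j := by
  unfold fVec; split <;> norm_num

lemma loc_mono {M M' : Set (Fin n → ℤ)} (h : M ⊆ M') : locSet A M ⊆ locSet A M' := by
  rintro b ⟨hb, k, hk⟩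
  exact ⟨hb, k, h hk⟩

lemma exists_bound (c : Fin n → ℤ) : ∃ t : ℕ, ∀ j, -(c j) ≤ (t : ℤ) := by
  refine ⟨Finset.univ.sup fun j => (-(c j)).toNat, fun j => ?_⟩
  calc -(c j) ≤ ((-(c j)).toNat : ℤ) := Int.self_le_toNat _
    _ ≤ _ := by exact_mod_cast Finset.le_sup (f := fun j => (-(c j)).toNat) (Finset.mem_univ j)

lemma mem_SfMon_empty {c : Fin n → ℤ} (h : ∀ j, 0 ≤ c j) :
    c ∈ SfMon (∅ : Finset (Fin n)) := fun j _ => h j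

lemma loc_shift {M : Set (Fin n → ℤ)} (hM : IsMonomialIdeal ∅ M) {b : Fin n → ℤ}
    {k k' : ℕ} (hk : k ≤ k') (h : b + (k : ℤ) • fVec A ∈ M) :
    b + (k' : ℤ) • fVec A ∈ M := by
  have hmem : ((k' - k : ℕ) : ℤ) • fVec A ∈ SfMon (∅ : Finset (Fin n)) :=
    mem_SfMon_empty fun j => mul_nonneg (by positivity) (fVec_nonneg A j)
  have h2 := hM.2 _ h _ hmem
  have heq : b + (k' : ℤ) • fVec A
      = b + (k : ℤ) • fVec A + ((k' - k : ℕ) : ℤ) • fVec A := by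
    funext j
    simp only [Pi.add_apply, Pi.smul_apply, smul_eq_mul]
    push_cast [hk]
    ring
  rw [heq]; exact h2

lemma loc_ideal {M : Set (Fin n → ℤ)} (hM : IsMonomialIdeal ∅ M) :
    IsMonomialIdeal A (locSet A M) := by
  constructor
  · rintro b ⟨hb, -⟩; exact hb
  · rintro b ⟨hb, k, hk⟩ c hc
    obtain ⟨t, ht⟩ := exists_bound c
    refine ⟨fun j hj => add_nonneg (hb j hj) (hc j hj), k + t, ?_⟩
    have hmem : (fun j => c j + (t : ℤ) * fVec A j) ∈ SfMon (∅ : Finset (Fin n)) := by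
      apply mem_SfMon_empty
      intro j
      unfold fVec
      by_cases hj : j ∈ A
      · simp only [hj, if_true, mul_one]
        linarith [ht j]
      · simp only [hj, if_false, mul_zero, add_zero]
        exact hc j hj
    have h2 := hM.2 _ hk _ hmem
    have heq : b + c + ((k + t : ℕ) : ℤ) • fVec A
        = b + (k : ℤ) • fVec A + fun j => c j + (t : ℤ) * fVec A j := by
      funext j
      simp only [Pi.add_apply, Pi.smul_apply, smul_eq_mul]
      push_cast
      ring
    rw [heq]; exact h2

lemma step_collapse {M M' : Set (Fin n → ℤ)} (hM' : IsMonomialIdeal ∅ M')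
    {a : Fin n → ℤ} {B : Finset (Fin n)}
    (hdiff : M' \ M =
      {b | ∃ c ∈ SfMon (∅ : Finset (Fin n)), (∀ j ∈ B, c j = 0) ∧ b = a + c})
    {l : Fin n} (hlB : l ∈ B) (hlA : l ∈ A) :
    locSet A M' ⊆ locSet A M := by
  rintro b ⟨hb, k, hk⟩
  by_contra hbM
  have hnot : ∀ m : ℕ, b + (m : ℤ) • fVec A ∉ M := fun m hm => hbM ⟨hb, m, hm⟩
  have key : ∀ m : ℕ, k ≤ m → b l + (m : ℤ) = a l := by
    intro m hm
    have h1 : b + (m : ℤ) • fVec A ∈ M' \ M := ⟨loc_shift A hM' hm hk, hnot m⟩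
    rw [hdiff] at h1
    obtain ⟨c, -, hcB, hbc⟩ := h1
    have hcl := congrFun hbc l
    simp only [Pi.add_apply, Pi.smul_apply, smul_eq_mul] at hcl
    rw [hcB l hlB] at hcl
    unfold fVec at hcl
    simp only [hlA, if_true, mul_one, add_zero] at hcl
    linarith
  have e1 := key k le_rfl
  have e2 := key (k + 1) (Nat.le_succ k)
  push_cast at e2
  linarith

lemma step_survive {M M' : Set (Fin n → ℤ)} (hM : IsMonomialIdeal ∅ M)
    (hsub : M ⊆ M') {a : Fin n → ℤ} {B : Finset (Fin n)} (ha : ∀ j, 0 ≤ a j)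
    (hdiff : M' \ M =
      {b | ∃ c ∈ SfMon (∅ : Finset (Fin n)), (∀ j ∈ B, c j = 0) ∧ b = a + c})
    (hBA : ∀ l ∈ B, l ∉ A) :
    locSet A M ⊂ locSet A M' ∧
    locSet A M' \ locSet A M =
      {b | ∃ c ∈ SfMon A, (∀ j ∈ B, c j = 0) ∧
        b = (fun j => if j ∈ A then 0 else a j) + c} := by
  have hset : locSet A M' \ locSet A M =
      {b | ∃ c ∈ SfMon A, (∀ j ∈ B, c j = 0) ∧
        b = (fun j => if j ∈ A then 0 else a j) + c} := by
    ext b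
    constructor
    · rintro ⟨⟨hb, k, hk⟩, hbM⟩
      have hnot : ∀ m : ℕ, b + (m : ℤ) • fVec A ∉ M := fun m hm => hbM ⟨hb, m, hm⟩
      have h1 : b + (k : ℤ) • fVec A ∈ M' \ M := ⟨hk, hnot k⟩
      rw [hdiff] at h1
      obtain ⟨c, hc, hcB, hbc⟩ := h1
      have hbj : ∀ j, j ∉ A → b j = a j + c j := by
        intro j hj
        have hcj := congrFun hbc j
        simp only [Pi.add_apply, Pi.smul_apply, smul_eq_mul] at hcj
        unfold fVec at hcj
        simp only [hj, if_false, mul_zero, add_zero] at hcj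
        exact hcj
      refine ⟨fun j => b j - if j ∈ A then 0 else a j, ?_, ?_, ?_⟩
      · intro j hj
        simp only [hj, if_false]
        have := hc j (Finset.notMem_empty j)
        have := hbj j hj
        linarith
      · intro j hjB
        have hjA := hBA j hjB
        simp only [hjA, if_false]
        have := hbj j hjA
        rw [hcB j hjB] at this
        linarith
      · funext j
        simp only [Pi.add_apply]
        ring
    · rintro ⟨c, hc, hcB, rfl⟩
      obtain ⟨t, ht⟩ := exists_bound (fun j => c j - a j)
      have hkey : ∀ m : ℕ, t ≤ m →
          (fun j => if j ∈ A then 0 else a j) + c + (m : ℤ) • fVec A ∈ M' \ M := by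
        intro m hm
        rw [hdiff]
        refine ⟨fun j => (if j ∈ A then 0 else a j) + c j + (m : ℤ) * fVec A j - a j,
          ?_, ?_, ?_⟩
        · intro j _
          unfold fVec
          by_cases hj : j ∈ A
          · simp only [hj, if_true, mul_one, zero_add]
            have h1 := ht j
            try simp only at h1
            have h2 : (t : ℤ) ≤ (m : ℤ) := by exact_mod_cast hm
            linarith
          · simp only [hj, if_false, mul_zero, add_zero]
            have := hc j hj
            linarith
        · intro j hjB
          have hjA := hBA j hjB
          unfold fVec
          simp only [hjA, if_false, mul_zero, add_zero, hcB j hjB]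
          ring
        · funext j
          simp only [Pi.add_apply, Pi.smul_apply, smul_eq_mul]
          ring
      constructor
      · refine ⟨?_, t, (hkey t le_rfl).1⟩
        intro j hj
        simp only [Pi.add_apply, hj, if_false]
        exact add_nonneg (ha j) (hc j hj)
      · rintro ⟨-, m, hm⟩
        exact (hkey (max t m) (le_max_left _ _)).2
          (loc_shift A hM (le_max_right _ _) hm)
  have hx : (fun j => if j ∈ A then 0 else a j) ∈ locSet A M' \ locSet A M := by
    rw [hset]
    exact ⟨0, fun j _ => le_refl 0, fun j _ => rfl, (add_zero _).symm⟩
  refine ⟨?_, hset⟩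
  rw [Set.ssubset_def]
  exact ⟨loc_mono A hsub, fun hcont => hx.2 (hcont hx.1)⟩

lemma main_loc (r : ℕ) :
    ∀ (J I : Set (Fin n → ℤ)) (N : Fin (r + 1) → Set (Fin n → ℤ))
      (B : Fin r → Finset (Fin n)) (a : Fin r → Fin n → ℤ),
      IsPrimeFiltration (∅ : Finset (Fin n)) J I r N B a →
      ∃ (s : ℕ) (N' : Fin (s + 1) → Set (Fin n → ℤ)) (B' : Fin s → Finset (Fin n))
        (a' : Fin s → Fin n → ℤ),
        IsPrimeFiltration A (locSet A J) (locSet A I) s N' B' a' ∧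
        (∀ j : Fin (s + 1), ∃ i : Fin (r + 1), N' j = locSet A (N i)) ∧
        (∀ j : Fin s, ∃ i : Fin r, (∀ l ∈ A, l ∉ B i) ∧ B' j = B i) := by
  induction r with
  | zero =>
    intro J I N B a h
    obtain ⟨h0, hl, hid, -, -, -, -, -⟩ := h
    have hlast0 : (Fin.last 0) = (0 : Fin 1) := by decide
    have hJI : J = I := by rw [← h0, ← hl, hlast0]
    refine ⟨0, fun _ => locSet A J, Fin.elim0, Fin.elim0,
      ⟨rfl, by rw [hJI], fun i => loc_ideal A (by rw [← h0]; exact hid 0),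
        fun i => i.elim0, fun i => i.elim0, fun i => i.elim0, fun i => i.elim0,
        fun i => i.elim0⟩,
      fun j => ⟨0, by rw [h0]⟩, fun j => j.elim0⟩
  | succ r IH =>
    intro J I N B a h
    obtain ⟨h0, hl, hid, hstep, hBA, hapos, haA, hdiff⟩ := h
    have hres : IsPrimeFiltration (∅ : Finset (Fin n)) J (N (Fin.last r).castSucc) r
        (fun i => N i.castSucc) (fun i => B i.castSucc) (fun i => a i.castSucc) := by
      refine ⟨by simpa using h0, rfl, fun i => hid _, fun i => ?_, fun i => hBA _,
        fun i => hapos _, fun i => haA _, fun i => ?_⟩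
      · have hs := hstep i.castSucc
        rwa [Fin.succ_castSucc] at hs
      · have hd := hdiff i.castSucc
        rwa [Fin.succ_castSucc] at hd
    obtain ⟨s, N', B', a', hF, hN', hB'⟩ := IH J _ _ _ _ hres
    have hlastdiff : I \ N (Fin.last r).castSucc =
        {b | ∃ c ∈ SfMon (∅ : Finset (Fin n)), (∀ j ∈ B (Fin.last r), c j = 0) ∧
          b = a (Fin.last r) + c} := by
      have hd := hdiff (Fin.last r)
      rwa [Fin.succ_last, hl] at hd
    have hlastsub : N (Fin.last r).castSucc ⊆ I := by
      have hs := (hstep (Fin.last r)).subset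
      rwa [Fin.succ_last, hl] at hs
    have hIid : IsMonomialIdeal (∅ : Finset (Fin n)) I := by
      rw [← hl]; exact hid _
    by_cases hc : ∀ l ∈ B (Fin.last r), l ∉ A
    · -- surviving last step: append it to the localized filtration
      obtain ⟨g0, gl, gid, gstep, gBA, gapos, gaA, gdiff⟩ := hF
      have hsv := step_survive A (hid _) hlastsub (hapos (Fin.last r)) hlastdiff hc
      refine ⟨s + 1, Fin.snoc N' (locSet A I), Fin.snoc B' (B (Fin.last r)),
        Fin.snoc a' (fun j => if j ∈ A then 0 else a (Fin.last r) j), ?_, ?_, ?_⟩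
      · refine ⟨?_, ?_, ?_, ?_, ?_, ?_, ?_, ?_⟩
        · rw [← Fin.castSucc_zero, Fin.snoc_castSucc]
          exact g0
        · rw [Fin.snoc_last]
        · intro i
          induction i using Fin.lastCases with
          | last => simp only [Fin.snoc_last]; exact loc_ideal A hIid
          | cast i0 => simp only [Fin.snoc_castSucc]; exact gid i0
        · intro i
          induction i using Fin.lastCases with
          | last =>
            simp only [Fin.succ_last, Fin.snoc_last, Fin.snoc_castSucc, gl]
            exact hsv.1
          | cast i0 =>
            simp only [Fin.succ_castSucc, Fin.snoc_castSucc]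
            exact gstep i0
        · intro i
          induction i using Fin.lastCases with
          | last =>
            simp only [Fin.snoc_last]
            exact fun j hjA hjB => hc j hjB hjA
          | cast i0 =>
            simp only [Fin.snoc_castSucc]
            exact gBA i0
        · intro i
          induction i using Fin.lastCases with
          | last =>
            simp only [Fin.snoc_last]
            intro j
            by_cases hj : j ∈ A
            · simp [hj]
            · simp only [hj, if_false]
              exact hapos (Fin.last r) j
          | cast i0 =>
            simp only [Fin.snoc_castSucc]
            exact gapos i0
        · intro i
          induction i using Fin.lastCases with
          | last =>
            simp only [Fin.snoc_last]
            intro j hj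
            simp [hj]
          | cast i0 =>
            simp only [Fin.snoc_castSucc]
            exact gaA i0
        · intro i
          induction i using Fin.lastCases with
          | last =>
            simp only [Fin.succ_last, Fin.snoc_last, Fin.snoc_castSucc, gl]
            exact hsv.2
          | cast i0 =>
            simp only [Fin.succ_castSucc, Fin.snoc_castSucc]
            exact gdiff i0
      · intro j
        induction j using Fin.lastCases with
        | last => exact ⟨Fin.last (r + 1), by simp only [Fin.snoc_last]; rw [hl]⟩
        | cast j0 =>
          obtain ⟨i, hi⟩ := hN' j0
          exact ⟨i.castSucc, by simp only [Fin.snoc_castSucc]; exact hi⟩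
      · intro j
        induction j using Fin.lastCases with
        | last => exact ⟨Fin.last r, fun l hlA hlB => hc l hlB hlA, by simp only [Fin.snoc_last]⟩
        | cast j0 =>
          obtain ⟨i, hiA, hie⟩ := hB' j0
          exact ⟨i.castSucc, hiA, by simp only [Fin.snoc_castSucc]; exact hie⟩
    · -- collapsed last step: the localization does not change
      push_neg at hc
      obtain ⟨l, hlB, hlA⟩ := hc
      have hcol : locSet A I = locSet A (N (Fin.last r).castSucc) :=
        Set.Subset.antisymm (step_collapse A hIid hlastdiff hlB hlA)
          (loc_mono A hlastsub)
      refine ⟨s, N', B', a', ?_, ?_, ?_⟩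
      · rw [hcol]; exact hF
      · intro j
        obtain ⟨i, hi⟩ := hN' j
        exact ⟨i.castSucc, hi⟩
      · intro j
        obtain ⟨i, hiA, hie⟩ := hB' j
        exact ⟨i.castSucc, hiA, hie⟩

end FdepthLocAux

/-- `fdepth` does not decrease upon localization: for monomial ideals `J ⊂ I ⊂ S`
(ambient parameter `A = ∅`), `fdepth I/J ≤ fdepth (I/J)_f`.  More precisely, from every
prime filtration `F` of `I/J` with support `{P_{B 1}, …, P_{B r}}`, discarding the
collapsed steps of the localized chain (those with `S_f/P_{B i}S_f = 0`, i.e.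
`B i ∩ A ≠ ∅`) yields a prime filtration `F_f` of `(I/J)_f` whose ideals are the
localizations of the `N i` and whose primes are the surviving `P_{B i}·S_f`; since
`dim S_f/P_B S_f = dim S/P_B = n - |B|` for surviving primes, `fdepth F_f ≥ fdepth F`. -/
theorem fdepth_le_fdepth_localization {n : ℕ} (A : Finset (Fin n))
    (I J : Set (Fin n → ℤ))
    (hI : IsMonomialIdeal (∅ : Finset (Fin n)) I) (hJ : IsMonomialIdeal ∅ J)
    (hJI : J ⊂ I) :
    fdepth (∅ : Finset (Fin n)) J I ≤ fdepth A (locSet A J) (locSet A I) ∧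
    ∀ (r : ℕ) (N : Fin (r + 1) → Set (Fin n → ℤ)) (B : Fin r → Finset (Fin n))
      (a : Fin r → Fin n → ℤ), IsPrimeFiltration (∅ : Finset (Fin n)) J I r N B a →
      ∃ (s : ℕ) (N' : Fin (s + 1) → Set (Fin n → ℤ)) (B' : Fin s → Finset (Fin n))
        (a' : Fin s → Fin n → ℤ),
        IsPrimeFiltration A (locSet A J) (locSet A I) s N' B' a' ∧
        (∀ j : Fin (s + 1), ∃ i : Fin (r + 1), N' j = locSet A (N i)) ∧
        (∀ j : Fin s, ∃ i : Fin r, (∀ l ∈ A, l ∉ B i) ∧ B' j = B i) ∧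
        (Finset.univ.inf fun i : Fin r => ((n - (B i).card : ℕ) : ℕ∞)) ≤
          Finset.univ.inf fun j : Fin s => ((n - (B' j).card : ℕ) : ℕ∞) := by
  constructor
  · apply sSup_le_sSup
    rintro k ⟨r, N, B, a, hF, hk⟩
    obtain ⟨s, N', B', a', hF', hN', hB'⟩ := main_loc A r J I N B a hF
    refine ⟨s, N', B', a', hF', fun j => ?_⟩
    obtain ⟨i, -, hBe⟩ := hB' j
    rw [hBe]
    exact hk i
  · intro r N B a hF
    obtain ⟨s, N', B', a', hF', hN', hB'⟩ := main_loc A r J I N B a hF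
    refine ⟨s, N', B', a', hF', hN', hB', ?_⟩
    apply Finset.le_inf
    intro j _
    obtain ⟨i, -, hBe⟩ := hB' j
    rw [hBe]
    exact Finset.inf_le (Finset.mem_univ i)
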